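/- arXiv:1909.08309 — 13 statements merged into one kernel-verified Lean document; each statement's English description precedes it below -/
import Mathlib

section
/- For any metric d on the double of X, the metric I defined by I(x,y') = d_X(x,y) + 1 satisfies I ∘ d quasi-isometric to d and d ∘ I quasi-isometric to d; in particular, [I] is a two-sided unit of the semigroup M(X). -/
open Metric

/-- A cross-metric between metric spaces `X` and `Y`: the cross-distance part
`k x y = d(x, y)` of a metric on `X ⊔ Y` extending the given metrics, with the
distance between the two pieces bounded below away from zero. -/
structure CrossMetric (X Y : Type*) [MetricSpace X] [MetricSpace Y] where
  k : X → Y → ℝ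
  sep : ∃ ε > 0, ∀ x y, ε ≤ k x y
  tri_left : ∀ x x' y, k x y ≤ dist x x' + k x' y
  tri_right : ∀ x y y', k x y ≤ k x y' + dist y' y
  cross_left : ∀ x x' y, dist x x' ≤ k x y + k x' y
  cross_right : ∀ x y y', dist y y' ≤ k x y + k x y'

/-- Composition of cross-metrics: `(ρ ∘ d)(x,z) = inf_y [d(x,y) + ρ(y,z)]`. -/
noncomputable def compFun {X Y Z : Type*} (ρ : Y → Z → ℝ) (d : X → Y → ℝ) : X → Z → ℝ :=
  fun x z => ⨅ y, (d x y + ρ y z)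

/-- The adjoint cross-metric: `d*(y,x) = d(x,y)`. -/
def adjFun {X Y : Type*} (d : X → Y → ℝ) : Y → X → ℝ := fun y x => d x y

/-- Quasi-isometry of two cross-distance functions. -/
def QI {X Y : Type*} (d1 d2 : X → Y → ℝ) : Prop :=
  ∃ α > 0, ∃ β ≥ (1:ℝ), ∀ x y,
    -α + (1/β) * d1 x y ≤ d2 x y ∧ d2 x y ≤ α + β * d1 x y

/-- the metric `I(x,y') = d_X(x,y) + 1` is a two-sided unit up to
quasi-isometry: `I ∘ d ~ d` and `d ∘ I ~ d` for every metric `d` on the double of `X`. -/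
theorem statement3 {X : Type*} [MetricSpace X] [Nonempty X] (d : CrossMetric X X) :
    QI (compFun (fun x y => dist x y + 1) d.k) d.k ∧
    QI (compFun d.k (fun x y => dist x y + 1)) d.k := by
  constructor
  · refine ⟨1, one_pos, 1, le_refl 1, fun x z => ?_⟩
    have heq : compFun (fun x y => dist x y + 1) d.k x z = d.k x z + 1 := by
      have hlb : ∀ y, d.k x z + 1 ≤ d.k x y + (dist y z + 1) := by
        intro y
        have := d.tri_right x z y
        linarith
      refine le_antisymm ?_ (le_ciInf hlb)
      have := ciInf_le ⟨d.k x z + 1, fun r ⟨y, hy⟩ => hy ▸ hlb y⟩ z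
      simpa [compFun] using this
    rw [heq]
    constructor <;> linarith
  · refine ⟨1, one_pos, 1, le_refl 1, fun x z => ?_⟩
    have heq : compFun d.k (fun x y => dist x y + 1) x z = d.k x z + 1 := by
      have hlb : ∀ y, d.k x z + 1 ≤ (dist x y + 1) + d.k y z := by
        intro y
        have := d.tri_left x y z
        linarith
      refine le_antisymm ?_ (le_ciInf hlb)
      have := ciInf_le ⟨d.k x z + 1, fun r ⟨y, hy⟩ => hy ▸ hlb y⟩ x
      simpa [compFun, add_comm] using this
    rw [heq]
    constructor <;> linarith
end

section
/- For any metric d on the double of X, d(x,y') ≤ (d ∘ d* ∘ d)(x,y') ≤ 3 d(x,y') for all x,y ∈ X; in particular d ∘ d* ∘ d is quasi-isometric to d. -/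
open Metric

/-- for any metric `d` on the double of `X`,
`d ≤ d ∘ d* ∘ d ≤ 3 d` pointwise on cross pairs; in particular `d ∘ d* ∘ d ~ d`. -/
theorem statement4 {X : Type*} [MetricSpace X] [Nonempty X] (d : CrossMetric X X) :
    (∀ x y, d.k x y ≤ compFun d.k (compFun (adjFun d.k) d.k) x y ∧
      compFun d.k (compFun (adjFun d.k) d.k) x y ≤ 3 * d.k x y) ∧
    QI (compFun d.k (compFun (adjFun d.k) d.k)) d.k := by
  obtain ⟨ε, hε, hsep⟩ := d.sep
  have hpos : ∀ x y, 0 ≤ d.k x y := fun x y => le_trans hε.le (hsep x y)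
  -- inner composition
  have hinner_bdd : ∀ x z : X, BddBelow (Set.range fun w => d.k x w + adjFun d.k w z) :=
    fun x z => ⟨0, by rintro _ ⟨w, rfl⟩; exact add_nonneg (hpos x w) (hpos z w)⟩
  have hinner_lb : ∀ x z : X, dist x z ≤ compFun (adjFun d.k) d.k x z := by
    intro x z
    exact le_ciInf fun w => d.cross_left x z w
  have hinner_nonneg : ∀ x z : X, 0 ≤ compFun (adjFun d.k) d.k x z :=
    fun x z => le_trans dist_nonneg (hinner_lb x z)
  have houter_bdd : ∀ x y : X,
      BddBelow (Set.range fun z => compFun (adjFun d.k) d.k x z + d.k z y) :=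
    fun x y => ⟨0, by rintro _ ⟨z, rfl⟩; exact add_nonneg (hinner_nonneg x z) (hpos z y)⟩
  have key : ∀ x y, d.k x y ≤ compFun d.k (compFun (adjFun d.k) d.k) x y ∧
      compFun d.k (compFun (adjFun d.k) d.k) x y ≤ 3 * d.k x y := by
    intro x y
    constructor
    · refine le_ciInf fun z => ?_
      calc d.k x y ≤ dist x z + d.k z y := d.tri_left x z y
        _ ≤ compFun (adjFun d.k) d.k x z + d.k z y :=
          add_le_add_left (hinner_lb x z) _
    · have h1 : compFun d.k (compFun (adjFun d.k) d.k) x y ≤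
          compFun (adjFun d.k) d.k x x + d.k x y := ciInf_le (houter_bdd x y) x
      have h2 : compFun (adjFun d.k) d.k x x ≤ d.k x y + d.k x y :=
        ciInf_le (hinner_bdd x x) y
      linarith
  refine ⟨key, 1, one_pos, 3, by norm_num, fun x y => ?_⟩
  obtain ⟨h1, h2⟩ := key x y
  constructor <;> linarith
end

section
/- If d* = d is a selfadjoint metric on the double of X, then d ∘ d is quasi-isometric to d if and only if there exist α ≥ 0, β ≥ 1 such that d(x,X') ≥ -α + (1/β) d(x,x') for all x ∈ X, where d(x,X') = inf_{y∈X} d(x,y'). -/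
open Metric

/-- a selfadjoint metric `d` on the double of `X` is idempotent
(`d ∘ d ~ d`) iff there are `α ≥ 0`, `β ≥ 1` with
`d(x,X') ≥ -α + (1/β) d(x,x')` for all `x`, where `d(x,X') = inf_y d(x,y')`. -/
theorem statement5 {X : Type*} [MetricSpace X] [Nonempty X] (d : CrossMetric X X)
    (hsa : ∀ x y, d.k x y = d.k y x) :
    QI (compFun d.k d.k) d.k ↔
      ∃ α ≥ (0:ℝ), ∃ β ≥ (1:ℝ), ∀ x, -α + (1/β) * d.k x x ≤ ⨅ y, d.k x y := by
  obtain ⟨ε, hε, hsep⟩ := d.sep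
  have hk0 : ∀ x y, 0 ≤ d.k x y := fun x y => le_trans hε.le (hsep x y)
  have hbdd1 : ∀ x : X, BddBelow (Set.range fun y => d.k x y) := by
    intro x; exact ⟨0, by rintro _ ⟨y, rfl⟩; exact hk0 x y⟩
  have hbdd2 : ∀ x z : X, BddBelow (Set.range fun y => d.k x y + d.k y z) := by
    intro x z; exact ⟨0, by rintro _ ⟨y, rfl⟩; exact add_nonneg (hk0 x y) (hk0 y z)⟩
  have hI0 : ∀ x : X, (0:ℝ) ≤ ⨅ y, d.k x y := fun x => le_ciInf fun y => hk0 x y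
  have hcomp0 : ∀ x z : X, (0:ℝ) ≤ compFun d.k d.k x z := fun x z =>
    le_ciInf fun y => add_nonneg (hk0 x y) (hk0 y z)
  constructor
  · rintro ⟨α, hα, β, hβ, h⟩
    have hβ0 : (0:ℝ) < β := by linarith
    refine ⟨α / (2 * β), by positivity, 2 * β, by linarith, fun x => ?_⟩
    have h1 : d.k x x ≤ α + β * compFun d.k d.k x x := (h x x).2
    have h2 : compFun d.k d.k x x ≤ 2 * ⨅ y, d.k x y := by
      rw [show (2:ℝ) * (⨅ y, d.k x y) = (⨅ y, d.k x y) * 2 from mul_comm _ _,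
        ← div_le_iff₀ (by norm_num : (0:ℝ) < 2)]
      refine le_ciInf fun y => ?_
      have := ciInf_le (hbdd2 x x) y
      have hyx : d.k y x = d.k x y := hsa y x
      rw [div_le_iff₀ (by norm_num : (0:ℝ) < 2)]
      calc compFun d.k d.k x x ≤ d.k x y + d.k y x := this
        _ = d.k x y * 2 := by rw [hyx]; ring
    have h3 : d.k x x ≤ α + 2 * β * ⨅ y, d.k x y := by nlinarith
    have heq : -(α / (2 * β)) + 1 / (2 * β) * d.k x x = (d.k x x - α) / (2 * β) := by
      ring
    rw [heq, div_le_iff₀ (by positivity)]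
    linarith [mul_comm (⨅ y, d.k x y) (2 * β)]
  · rintro ⟨α, hα, β, hβ, h⟩
    have hβ0 : (0:ℝ) < β := by linarith
    -- d(x,x) ≤ β * (inf + α)
    have hxx : ∀ x : X, d.k x x ≤ β * ((⨅ y, d.k x y) + α) := by
      intro x
      have := h x
      have h' : (1 / β) * d.k x x ≤ (⨅ y, d.k x y) + α := by linarith
      calc d.k x x = β * ((1 / β) * d.k x x) := by field_simp
        _ ≤ β * ((⨅ y, d.k x y) + α) := by
            exact mul_le_mul_of_nonneg_left h' hβ0.le
    refine ⟨β * α + 1, by positivity, β + 3, by linarith, fun x z => ?_⟩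
    have hI_le : ∀ x y : X, (⨅ w, d.k x w) ≤ d.k x y := fun x y => ciInf_le (hbdd1 x) y
    constructor
    · -- lower bound: comp ≤ (β+3) * d(x,z) + β*α
      have hcomp_le : compFun d.k d.k x z ≤ (β + 3) * d.k x z + β * α := by
        have step : ∀ y : X, compFun d.k d.k x z ≤ 2 * d.k x y + d.k x x + d.k x z := by
          intro y
          refine le_trans (ciInf_le (hbdd2 x z) y) ?_
          have h1 : d.k y z ≤ dist y x + d.k x z := d.tri_left y x z
          have h2 : dist y x ≤ d.k y x + d.k x x := d.cross_left y x x
          have h3 : d.k y x = d.k x y := hsa y x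
          linarith
        -- so comp ≤ 2 * inf + d(x,x) + d(x,z)
        have h4 : compFun d.k d.k x z ≤ 2 * (⨅ y, d.k x y) + d.k x x + d.k x z := by
          have h5 : (compFun d.k d.k x z - d.k x x - d.k x z) / 2 ≤ ⨅ y, d.k x y := by
            refine le_ciInf fun y => ?_
            rw [div_le_iff₀ (by norm_num : (0:ℝ) < 2)]
            have := step y
            linarith
          rw [div_le_iff₀ (by norm_num : (0:ℝ) < 2)] at h5
          linarith
        have h6 := hxx x
        have h7 := hI_le x z
        nlinarith [hI0 x]
      have heq : -(β * α + 1) + 1 / (β + 3) * compFun d.k d.k x z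
          = (compFun d.k d.k x z - (β * α + 1) * (β + 3)) / (β + 3) := by
        field_simp
        ring
      rw [heq, div_le_iff₀ (by positivity)]
      have hba : (0:ℝ) ≤ β * α := mul_nonneg hβ0.le hα
      have h8 : β * α + 1 ≤ (β * α + 1) * (β + 3) := by nlinarith
      nlinarith [hcomp0 x z, mul_nonneg (by linarith : (0:ℝ) ≤ β + 2) (hk0 x z)]
    · -- upper bound: d(x,z) ≤ (β+1) * comp + β*α
      have hd_le : d.k x z ≤ (β + 1) * compFun d.k d.k x z + β * α := by
        have step : ∀ y : X, d.k x z ≤ (β + 1) * (d.k x y + d.k y z) + β * α := by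
          intro y
          have h1 : d.k x z ≤ dist x y + d.k y z := d.tri_left x y z
          have h2 : dist x y ≤ d.k x y + d.k y y := d.cross_left x y y
          have h3 := hxx y
          have h4 := hI_le y z
          have h5 : β * (⨅ w, d.k y w) ≤ β * d.k y z :=
            mul_le_mul_of_nonneg_left h4 hβ0.le
          nlinarith [mul_nonneg hβ0.le (hk0 x y)]
        have h5 : (d.k x z - β * α) / (β + 1) ≤ compFun d.k d.k x z := by
          refine le_ciInf fun y => ?_
          rw [div_le_iff₀ (by positivity)]
          have := step y
          nlinarith
        rw [div_le_iff₀ (by positivity)] at h5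
        nlinarith
      nlinarith [hcomp0 x z]
end

section
/- Let d and ρ be selfadjoint idempotent metrics on the double of X (i.e., d* = d, ρ* = ρ, [d∘d] = [d], [ρ∘ρ] = [ρ]). Then ρ is quasi-isometric to d if and only if the functions x ↦ ρ(x,x') and x ↦ d(x,x') are equivalent, i.e., there exist α ≥ 0, β ≥ 1 with -α + (1/β) d(x,x') ≤ ρ(x,x') ≤ α + β d(x,x') for all x ∈ X. -/
open Metric

lemma crossmetric_pos {X : Type*} [MetricSpace X] (d : CrossMetric X X) (x y : X) :
    0 < d.k x y := by
  obtain ⟨ε, hε, hsep⟩ := d.sep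
  exact lt_of_lt_of_le hε (hsep x y)

/-- From idempotency: the diagonal value is controlled by any cross value. -/
lemma diag_bound {X : Type*} [MetricSpace X] [Nonempty X] (d : CrossMetric X X)
    {a b : ℝ} (hb : (1:ℝ) ≤ b)
    (h : ∀ x y, d.k x y ≤ a + b * compFun d.k d.k x y) :
    ∀ x y, d.k x x ≤ a + b * (d.k x y + d.k y x) := by
  intro x y
  have hbdd : BddBelow (Set.range fun z => d.k x z + d.k z x) := by
    refine ⟨0, ?_⟩
    rintro _ ⟨z, rfl⟩
    have h1 := crossmetric_pos d x z
    have h2 := crossmetric_pos d z x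
    dsimp; linarith
  have h1 : compFun d.k d.k x x ≤ d.k x y + d.k y x := ciInf_le hbdd y
  have h2 := h x x
  have h3 := mul_le_mul_of_nonneg_left h1 (by linarith : (0:ℝ) ≤ b)
  linarith

/-- two selfadjoint idempotent metrics on the double of `X` are
quasi-isometric iff the functions `x ↦ ρ(x,x')` and `x ↦ d(x,x')` are equivalent. -/
theorem statement6 {X : Type*} [MetricSpace X] [Nonempty X] (d ρ : CrossMetric X X)
    (hd : ∀ x y, d.k x y = d.k y x) (hρ : ∀ x y, ρ.k x y = ρ.k y x)
    (hd2 : QI (compFun d.k d.k) d.k) (hρ2 : QI (compFun ρ.k ρ.k) ρ.k) :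
    QI ρ.k d.k ↔
      ∃ α ≥ (0:ℝ), ∃ β ≥ (1:ℝ), ∀ x,
        -α + (1/β) * d.k x x ≤ ρ.k x x ∧ ρ.k x x ≤ α + β * d.k x x := by
  constructor
  · -- forward: specialize to the diagonal, flipping the roles of d and ρ
    rintro ⟨α, hα, β, hβ, h⟩
    have hβ0 : (0:ℝ) < β := lt_of_lt_of_le one_pos hβ
    refine ⟨β * α, by positivity, β, hβ, fun x => ?_⟩
    obtain ⟨h1, h2⟩ := h x x
    constructor
    · -- from d ≤ α + β ρ : ρ ≥ (d - α)/β ≥ -βα + (1/β) d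
      have e : (1/β) * d.k x x ≤ (1/β) * (α + β * ρ.k x x) :=
        mul_le_mul_of_nonneg_left h2 (by positivity)
      have e2 : (1/β) * (α + β * ρ.k x x) = α/β + ρ.k x x := by field_simp
      have e3 : α/β ≤ α := by
        rw [div_le_iff₀ hβ0]; nlinarith
      have e4 : α ≤ β * α := by nlinarith
      linarith [e2 ▸ e]
    · -- from -α + (1/β) ρ ≤ d : ρ ≤ β (d + α) = β α + β d
      have e : β * (-α + (1/β) * ρ.k x x) ≤ β * d.k x x :=
        mul_le_mul_of_nonneg_left h1 hβ0.le
      have e2 : β * (-α + (1/β) * ρ.k x x) = -(β*α) + ρ.k x x := by field_simp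
      linarith [e2 ▸ e]
  · rintro ⟨A, hA, B, hB, hdiag⟩
    obtain ⟨a, ha, b, hb, hD⟩ := hd2
    obtain ⟨a', ha', b', hb', hR⟩ := hρ2
    have hB0 : (0:ℝ) < B := lt_of_lt_of_le one_pos hB
    -- diag bounds from idempotency (with selfadjointness)
    have dDiag : ∀ x y, d.k x x ≤ a + 2*b * d.k x y := by
      intro x y
      have h1 := diag_bound d hb (fun x y => (hD x y).2) x y
      rw [hd y x] at h1
      have e : b * (d.k x y + d.k x y) = 2*b*d.k x y := by ring
      linarith [e ▸ h1]
    have rDiag : ∀ x y, ρ.k x x ≤ a' + 2*b' * ρ.k x y := by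
      intro x y
      have h1 := diag_bound ρ hb' (fun x y => (hR x y).2) x y
      rw [hρ y x] at h1
      have e : b' * (ρ.k x y + ρ.k x y) = 2*b'*ρ.k x y := by ring
      linarith [e ▸ h1]
    -- dist bounds
    have dDist : ∀ x y : X, dist x y ≤ a + (1 + 2*b) * d.k x y := by
      intro x y
      have h1 := d.cross_left x y y    -- dist x y ≤ d x y + d y y
      have h2 := dDiag y x             -- d y y ≤ a + 2 b d y x
      rw [← hd x y] at h2
      nlinarith
    have rDist : ∀ x y : X, dist x y ≤ a' + (1 + 2*b') * ρ.k x y := by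
      intro x y
      have h1 := ρ.cross_left x y y
      have h2 := rDiag y x
      rw [← hρ x y] at h2
      nlinarith
    refine ⟨A + B*a + a + B*A + B*a' + a' + 1,
           by positivity,
           2*B*b + 2*B*b' + 2 + 2*b + 2*b',
           by nlinarith, fun x y => ?_⟩
    have hkd := crossmetric_pos d x y
    have hkr := crossmetric_pos ρ x y
    have hβ0 : (0:ℝ) < 2*B*b + 2*B*b' + 2 + 2*b + 2*b' := by positivity
    constructor
    · -- lower bound on d: from ρ x y ≤ const + coeff * d x y
      have t1 : ρ.k x y ≤ ρ.k x x + dist x y := by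
        have h' := ρ.tri_right x y x
        rw [hρ x x] at h'
        exact h'
      have t2 := (hdiag x).2            -- ρ x x ≤ A + B d x x
      have t3 : d.k x x ≤ a + 2*b * d.k x y := dDiag x y
      have t4 : dist x y ≤ a + (1 + 2*b) * d.k x y := dDist x y
      have key : ρ.k x y ≤ (A + B*a + a) + (2*B*b + 1 + 2*b) * d.k x y := by nlinarith
      -- divide by β
      have e1 : (1/(2*B*b + 2*B*b' + 2 + 2*b + 2*b')) * ρ.k x y
          ≤ (1/(2*B*b + 2*B*b' + 2 + 2*b + 2*b')) * ((A + B*a + a) + (2*B*b + 1 + 2*b) * d.k x y) :=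
        mul_le_mul_of_nonneg_left key (by positivity)
      have hC : (0:ℝ) ≤ A + B*a + a := by positivity
      have hβ1 : (1:ℝ) ≤ 2*B*b + 2*B*b' + 2 + 2*b + 2*b' := by nlinarith
      have e2 : (1/(2*B*b + 2*B*b' + 2 + 2*b + 2*b')) * (A + B*a + a) ≤ A + B*a + a := by
        apply mul_le_of_le_one_left hC
        rw [div_le_one hβ0]; exact hβ1
      have e3 : (1/(2*B*b + 2*B*b' + 2 + 2*b + 2*b')) * ((2*B*b + 1 + 2*b) * d.k x y) ≤ d.k x y := by
        rw [div_mul_eq_mul_div, one_mul, div_le_iff₀ hβ0]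
        have p1 : 0 ≤ d.k x y * (B * b') := mul_nonneg hkd.le (mul_nonneg hB0.le (by linarith))
        have p2 : 0 ≤ d.k x y * b' := mul_nonneg hkd.le (by linarith)
        nlinarith [p1, p2]
      have e4 : (1/(2*B*b + 2*B*b' + 2 + 2*b + 2*b')) * ((A + B*a + a) + (2*B*b + 1 + 2*b) * d.k x y)
          = (1/(2*B*b + 2*B*b' + 2 + 2*b + 2*b')) * (A + B*a + a)
            + (1/(2*B*b + 2*B*b' + 2 + 2*b + 2*b')) * ((2*B*b + 1 + 2*b) * d.k x y) := by ring
      rw [e4] at e1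
      have q1 : (0:ℝ) ≤ B*A := mul_nonneg hB0.le hA
      have q2 : (0:ℝ) ≤ B*a' := mul_nonneg hB0.le (le_of_lt ha')
      linarith [q1, q2]
    · -- upper bound on d: d x y ≤ const + coeff * ρ x y ≤ α + β ρ x y
      have t1 : d.k x y ≤ d.k x x + dist x y := by
        have h' := d.tri_right x y x
        rw [hd x x] at h'
        exact h'
      have t2 := (hdiag x).1            -- -A + (1/B) d x x ≤ ρ x x
      have t2' : d.k x x ≤ B * A + B * ρ.k x x := by
        have h5 : (1/B) * d.k x x ≤ A + ρ.k x x := by linarith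
        have h6 := mul_le_mul_of_nonneg_left h5 hB0.le
        have h7 : B * ((1/B) * d.k x x) = d.k x x := by field_simp
        calc d.k x x = B * ((1/B) * d.k x x) := h7.symm
          _ ≤ B * (A + ρ.k x x) := h6
          _ = B * A + B * ρ.k x x := by ring
      have t3 : ρ.k x x ≤ a' + 2*b' * ρ.k x y := rDiag x y
      have t3' : B * ρ.k x x ≤ B * (a' + 2*b' * ρ.k x y) :=
        mul_le_mul_of_nonneg_left t3 hB0.le
      have t4 : dist x y ≤ a' + (1 + 2*b') * ρ.k x y := rDist x y
      have p1 : 0 ≤ ρ.k x y * (B * b) := mul_nonneg hkr.le (mul_nonneg hB0.le (by linarith))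
      have p2 : 0 ≤ ρ.k x y * b := mul_nonneg hkr.le (by linarith)
      have p3 : (0:ℝ) ≤ B*a := mul_nonneg hB0.le (le_of_lt ha)
      nlinarith [p1, p2, p3]
end

section
/- If d and ρ are selfadjoint idempotent metrics on the double of X, then d ∘ ρ is quasi-isometric to ρ ∘ d; that is, selfadjoint idempotents in M(X) commute. -/
open Metric

lemma CrossMetric.nonneg {X Y : Type*} [MetricSpace X] [MetricSpace Y] (d : CrossMetric X Y)
    (x : X) (y : Y) : 0 ≤ d.k x y := by
  obtain ⟨ε, hε, h⟩ := d.sep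
  exact le_trans hε.le (h x y)

lemma comp_le {X : Type*} [MetricSpace X] (d ρ : CrossMetric X X) (x z y : X) :
    compFun ρ.k d.k x z ≤ d.k x y + ρ.k y z := by
  apply ciInf_le ⟨0, ?_⟩ y
  rintro r ⟨u, rfl⟩
  exact add_nonneg (d.nonneg x u) (ρ.nonneg u z)

lemma comp_nonneg {X : Type*} [MetricSpace X] [Nonempty X] (d ρ : CrossMetric X X)
    (x z : X) : 0 ≤ compFun ρ.k d.k x z :=
  le_ciInf fun y => add_nonneg (d.nonneg x y) (ρ.nonneg y z)

/-- From idempotency: the diagonal value is controlled by any cross value. -/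
lemma diag_le {X : Type*} [MetricSpace X] [Nonempty X] (d : CrossMetric X X)
    (hd : ∀ x y, d.k x y = d.k y x) {α β : ℝ}
    (h : ∀ x y, d.k x y ≤ α + β * compFun d.k d.k x y) (hβ : 0 ≤ β) (x u : X) :
    d.k x x ≤ α + 2 * β * d.k x u := by
  have h1 := h x x
  have h2 : compFun d.k d.k x x ≤ d.k x u + d.k u x := comp_le d d x x u
  rw [hd u x] at h2
  nlinarith [d.nonneg x u]

/-- One-sided commutation bound. -/
lemma key {X : Type*} [MetricSpace X] [Nonempty X] (d ρ : CrossMetric X X)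
    (hd : ∀ x y, d.k x y = d.k y x) (hρ : ∀ x y, ρ.k x y = ρ.k y x)
    (hd2 : QI (compFun d.k d.k) d.k) (hρ2 : QI (compFun ρ.k ρ.k) ρ.k) :
    ∃ A > 0, ∃ B ≥ (1:ℝ), ∀ x z,
      compFun ρ.k d.k x z ≤ A + B * compFun d.k ρ.k x z := by
  obtain ⟨αd, hαd, βd, hβd, Hd⟩ := hd2
  obtain ⟨αρ, hαρ, βρ, hβρ, Hρ⟩ := hρ2
  have Dd : ∀ x u, d.k x x ≤ αd + 2 * βd * d.k x u :=
    diag_le d hd (fun x y => (Hd x y).2) (by linarith)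
  have Dρ : ∀ x u, ρ.k x x ≤ αρ + 2 * βρ * ρ.k x u :=
    diag_le ρ hρ (fun x y => (Hρ x y).2) (by linarith)
  refine ⟨3 * αd + 3 * αρ + 2 * βρ * αd, by nlinarith,
    (1 + 2 * βρ) * (1 + 2 * βd) + 4 * βρ + 2 * βd + 1, by nlinarith, fun x z => ?_⟩
  set A := 3 * αd + 3 * αρ + 2 * βρ * αd with hA
  set B := (1 + 2 * βρ) * (1 + 2 * βd) + 4 * βρ + 2 * βd + 1 with hB
  have hB1 : (1:ℝ) ≤ B := by nlinarith
  have hB0 : (0:ℝ) < B := by linarith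
  -- it suffices to show: ∀ y, g ≤ A + B * (ρ x y + d y z)
  have main : ∀ y, compFun ρ.k d.k x z ≤ A + B * (ρ.k x y + d.k y z) := by
    intro y
    have g_le : compFun ρ.k d.k x z ≤ d.k x y + ρ.k y z := comp_le d ρ x z y
    have e1 : d.k x y ≤ dist x y + d.k y y := d.tri_left x y y
    have e2 : d.k y y ≤ αd + 2 * βd * d.k y z := Dd y z
    have e3 : dist x y ≤ ρ.k x y + ρ.k y y := ρ.cross_left x y y
    have e4 : ρ.k y y ≤ αρ + 2 * βρ * ρ.k y x := Dρ y x
    rw [hρ y x] at e4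
    have e5 : ρ.k y z ≤ dist y z + ρ.k z z := ρ.tri_left y z z
    have e6 : dist y z ≤ d.k y z + d.k z z := d.cross_left y z z
    have e7 : d.k z z ≤ αd + 2 * βd * d.k z y := Dd z y
    rw [hd z y] at e7
    have e8 : ρ.k z z ≤ αρ + 2 * βρ * ρ.k z x := Dρ z x
    have e9 : ρ.k z x ≤ dist z y + ρ.k y x := ρ.tri_left z y x
    rw [dist_comm z y, hρ y x] at e9
    have n1 : 0 ≤ ρ.k x y := ρ.nonneg x y
    have n2 : 0 ≤ d.k y z := d.nonneg y z
    have hβρ0 : (0:ℝ) ≤ βρ := by linarith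
    have hβd0 : (0:ℝ) ≤ βd := by linarith
    have h9 : βρ * ρ.k z x ≤ βρ * (dist y z + ρ.k x y) :=
      mul_le_mul_of_nonneg_left e9 hβρ0
    have hD : dist y z ≤ αd + (1 + 2 * βd) * d.k y z := by linarith
    have h10 : βρ * dist y z ≤ βρ * (αd + (1 + 2 * βd) * d.k y z) :=
      mul_le_mul_of_nonneg_left hD hβρ0
    nlinarith [mul_nonneg hβρ0 n1, mul_nonneg hβd0 n2, mul_nonneg hβρ0 n2,
      mul_nonneg hβd0 n1, mul_nonneg (mul_nonneg hβρ0 hβd0) n1,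
      mul_nonneg (mul_nonneg hβρ0 hβd0) n2, mul_nonneg hβρ0 hαd.le,
      mul_nonneg hβd0 hαρ.le, hαd.le, hαρ.le]
  have step : (compFun ρ.k d.k x z - A) / B ≤ compFun d.k ρ.k x z := by
    apply le_ciInf
    intro y
    rw [div_le_iff₀ hB0]
    have := main y
    linarith [this, mul_comm ((ρ.k x y + d.k y z)) B]
  rw [div_le_iff₀ hB0] at step
  nlinarith [comp_nonneg d ρ x z]

/-- selfadjoint idempotent metrics on the double of `X` commute up to
quasi-isometry: `d ∘ ρ ~ ρ ∘ d`. -/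
theorem statement7 {X : Type*} [MetricSpace X] [Nonempty X] (d ρ : CrossMetric X X)
    (hd : ∀ x y, d.k x y = d.k y x) (hρ : ∀ x y, ρ.k x y = ρ.k y x)
    (hd2 : QI (compFun d.k d.k) d.k) (hρ2 : QI (compFun ρ.k ρ.k) ρ.k) :
    QI (compFun d.k ρ.k) (compFun ρ.k d.k) := by
  obtain ⟨A, hA, B, hB, h1⟩ := key d ρ hd hρ hd2 hρ2
  obtain ⟨A', hA', B', hB', h2⟩ := key ρ d hρ hd hρ2 hd2
  have hB'0 : (0:ℝ) < B' := by linarith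
  have hβm : (0:ℝ) < max B B' := lt_of_lt_of_le hB'0 (le_max_right _ _)
  refine ⟨max A A', lt_max_of_lt_left hA, max B B', le_trans hB (le_max_left _ _),
    fun x z => ⟨?_, ?_⟩⟩
  · -- lower bound
    have hf0 : 0 ≤ compFun d.k ρ.k x z := comp_nonneg ρ d x z
    have t1 : (1 / max B B') * compFun d.k ρ.k x z ≤ (1 / B') * compFun d.k ρ.k x z :=
      mul_le_mul_of_nonneg_right (one_div_le_one_div_of_le hB'0 (le_max_right _ _)) hf0
    have t2 : (1 / B') * compFun d.k ρ.k x z ≤ (1 / B') * (A' + B' * compFun ρ.k d.k x z) :=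
      mul_le_mul_of_nonneg_left (h2 x z) (by positivity)
    have t3 : (1 / B') * (A' + B' * compFun ρ.k d.k x z) = A' / B' + compFun ρ.k d.k x z := by
      field_simp
    have t4 : A' / B' ≤ A' := div_le_self hA'.le hB'
    have t5 : A' ≤ max A A' := le_max_right _ _
    linarith [t2.trans_eq t3]
  · -- upper bound
    have hf0 : 0 ≤ compFun d.k ρ.k x z := comp_nonneg ρ d x z
    have := h1 x z
    have : B * compFun d.k ρ.k x z ≤ max B B' * compFun d.k ρ.k x z :=
      mul_le_mul_of_nonneg_right (le_max_left _ _) hf0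
    have t5 : A ≤ max A A' := le_max_left _ _
    linarith [h1 x z]
end

section
/- For a subset A ⊆ X, the metric d_A on the double of X defined by d_A(x,y') = inf_{z∈A}[d_X(x,z) + 1 + d_X(z,y)] is selfadjoint and idempotent: d_A* = d_A, d_A(x,x') = 2 d_X(x,A) + 1, d_A(x,X') = d_X(x,A) + 1, and d_A ∘ d_A is quasi-isometric to d_A. -/
open Metric

/-- for a nonempty `A ⊆ X`, the metric
`d_A(x,y') = inf_{z∈A}[d(x,z) + 1 + d(z,y)]` on the double of `X` is selfadjoint,
satisfies `d_A(x,x') = 2 d(x,A) + 1` and `d_A(x,X') = d(x,A) + 1`, and is idempotent. -/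
theorem statement9 {X : Type*} [MetricSpace X] [Nonempty X] (A : Set X)
    (hA : A.Nonempty) :
    let dA : X → X → ℝ := fun x y => ⨅ z : A, (dist x (z : X) + 1 + dist (z : X) y)
    (∀ x y, dA x y = dA y x) ∧
    (∀ x, dA x x = 2 * infDist x A + 1) ∧
    (∀ x, (⨅ y, dA x y) = infDist x A + 1) ∧
    QI (compFun dA dA) dA := by
  intro dA
  haveI : Nonempty A := hA.to_subtype
  have hbdd : ∀ x y : X, BddBelow (Set.range fun z : A => dist x (z : X) + 1 + dist (z : X) y) := by
    intro x y
    refine ⟨1, ?_⟩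
    rintro r ⟨z, rfl⟩
    dsimp only
    have := dist_nonneg (x := x) (y := (z : X))
    have := dist_nonneg (x := (z : X)) (y := y)
    linarith
  have hle : ∀ (x y : X) (z : A), dA x y ≤ dist x (z : X) + 1 + dist (z : X) y := by
    intro x y z
    exact ciInf_le (hbdd x y) z
  have hone : ∀ x y, 1 ≤ dA x y := by
    intro x y
    refine le_ciInf fun z => ?_
    have := dist_nonneg (x := x) (y := (z : X))
    have := dist_nonneg (x := (z : X)) (y := y)
    linarith
  have hlow : ∀ x y, infDist x A + 1 ≤ dA x y := by
    intro x y
    refine le_ciInf fun z => ?_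
    have h1 : infDist x A ≤ dist x (z : X) := infDist_le_dist_of_mem z.2
    have := dist_nonneg (x := (z : X)) (y := y)
    linarith
  have hxx : ∀ x, dA x x = 2 * infDist x A + 1 := by
    intro x
    refine le_antisymm ?_ ?_
    · have h : (dA x x - 1) / 2 ≤ infDist x A := by
        rw [← not_lt]
        intro hlt
        rw [infDist_lt_iff hA] at hlt
        obtain ⟨z, hz, hd⟩ := hlt
        have := hle x x ⟨z, hz⟩
        simp only [dist_comm] at this
        linarith
      linarith
    · refine le_ciInf fun z => ?_
      have h1 : infDist x A ≤ dist x (z : X) := infDist_le_dist_of_mem z.2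
      rw [dist_comm x (z : X)] at h1 ⊢
      linarith
  have hsymm : ∀ x y, dA x y = dA y x := by
    intro x y
    refine iInf_congr fun z => ?_
    rw [dist_comm x (z : X), dist_comm (z : X) y]
    ring
  refine ⟨hsymm, hxx, ?_, ?_⟩
  · intro x
    have hb : BddBelow (Set.range fun y => dA x y) := by
      refine ⟨1, ?_⟩
      rintro r ⟨y, rfl⟩
      exact hone x y
    refine le_antisymm ?_ (le_ciInf fun y => hlow x y)
    have h : (⨅ y, dA x y) - 1 ≤ infDist x A := by
      rw [← not_lt]
      intro hlt
      rw [infDist_lt_iff hA] at hlt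
      obtain ⟨z, hz, hd⟩ := hlt
      have h1 : (⨅ y, dA x y) ≤ dA x z := ciInf_le hb z
      have h2 := hle x z ⟨z, hz⟩
      simp only [dist_self] at h2
      linarith
    linarith
  · -- QI
    have hlower : ∀ x z, dA x z + 1 ≤ compFun dA dA x z := by
      intro x z
      refine le_ciInf fun y => ?_
      -- dA x z + 1 ≤ dA x y + dA y z
      have h : dA x z + 1 - dA y z ≤ dA x y := by
        refine le_ciInf fun a => ?_
        have h2 : dA x z + 1 - (dist x (a : X) + 1 + dist (a : X) y) ≤ dA y z := by
          refine le_ciInf fun b => ?_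
          have h3 := hle x z a
          have h4 : dist (a : X) z ≤ dist (a : X) y + dist y (b : X) + dist (b : X) z :=
            dist_triangle4 _ _ _ _
          linarith
        linarith
      linarith
    have hupper : ∀ x z, compFun dA dA x z ≤ 3 * dA x z - 1 := by
      intro x z
      have hb : BddBelow (Set.range fun y => dA x y + dA y z) := by
        refine ⟨2, ?_⟩
        rintro r ⟨y, rfl⟩
        dsimp only
        have := hone x y
        have := hone y z
        linarith
      have h1 : compFun dA dA x z ≤ dA x x + dA x z := ciInf_le hb x
      have h2 : infDist x A + 1 ≤ dA x z := hlow x z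
      rw [hxx x] at h1
      linarith
    refine ⟨1, one_pos, 3, by norm_num, fun x z => ?_⟩
    have h1 := hlower x z
    have h2 := hupper x z
    have h3 := hone x z
    constructor <;> [skip; skip] <;> nlinarith
end

section
/- For nonempty closed subsets A, B of a metric space X, the metrics d_A and d_B on the double of X are quasi-isometric if and only if there exists C > 0 such that A lies in the C-neighborhood of B and B lies in the C-neighborhood of A. -/
open Metric

private lemma dbl_bdd {X : Type*} [MetricSpace X] (A : Set X) (x y : X) :
    BddBelow (Set.range fun z : A => dist x (z : X) + 1 + dist (z : X) y) := by
  refine ⟨0, ?_⟩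
  rintro _ ⟨z, rfl⟩
  positivity

private lemma dbl_self_le {X : Type*} [MetricSpace X] {A : Set X} {a : X} (ha : a ∈ A) :
    (⨅ z : A, (dist a (z : X) + 1 + dist (z : X) a)) ≤ 1 := by
  have := ciInf_le (dbl_bdd A a a) (⟨a, ha⟩ : A)
  simpa using this

private lemma infDist_le_dbl {X : Type*} [MetricSpace X] {A : Set X} (hA : A.Nonempty)
    (a : X) : 2 * infDist a A + 1 ≤ ⨅ z : A, (dist a (z : X) + 1 + dist (z : X) a) := by
  haveI : Nonempty A := hA.to_subtype
  refine le_ciInf fun z => ?_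
  have h1 : infDist a A ≤ dist a (z : X) := infDist_le_dist_of_mem z.2
  have h2 : dist (z : X) a = dist a (z : X) := dist_comm _ _
  linarith

private lemma dbl_key {X : Type*} [MetricSpace X] {A B : Set X} (hA : A.Nonempty)
    (hB : B.Nonempty) {C : ℝ} (h : ∀ a ∈ A, infDist a B ≤ C) (x y : X) :
    (⨅ z : B, (dist x (z : X) + 1 + dist (z : X) y)) ≤
      (⨅ z : A, (dist x (z : X) + 1 + dist (z : X) y)) + (2 * C + 1) := by
  haveI : Nonempty A := hA.to_subtype
  rw [← sub_le_iff_le_add]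
  refine le_ciInf fun z => ?_
  rw [sub_le_iff_le_add]
  have h1 : infDist (z : X) B < C + 1/2 := lt_of_le_of_lt (h z z.2) (by linarith)
  obtain ⟨w, hw, hwd⟩ := (Metric.infDist_lt_iff hB).mp h1
  have h2 : (⨅ z : B, (dist x (z : X) + 1 + dist (z : X) y)) ≤ dist x w + 1 + dist w y :=
    ciInf_le (dbl_bdd B x y) (⟨w, hw⟩ : B)
  have h3 := dist_triangle x (z : X) w
  have h4 := dist_triangle w (z : X) y
  have h5 : dist w (z : X) = dist (z : X) w := dist_comm _ _
  linarith

/-- for nonempty closed `A, B ⊆ X`, `d_A` and `d_B` are quasi-isometric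
iff for some `C > 0` each of `A`, `B` lies in the `C`-neighborhood of the other. -/
theorem statement10 {X : Type*} [MetricSpace X] [Nonempty X] (A B : Set X)
    (hA : A.Nonempty) (hB : B.Nonempty) (hAc : IsClosed A) (hBc : IsClosed B) :
    QI (fun x y => ⨅ z : A, (dist x (z : X) + 1 + dist (z : X) y))
       (fun x y => ⨅ z : B, (dist x (z : X) + 1 + dist (z : X) y)) ↔
      ∃ C > (0:ℝ), (∀ a ∈ A, infDist a B ≤ C) ∧ (∀ b ∈ B, infDist b A ≤ C) := by
  constructor
  · rintro ⟨α, hα, β, hβ, h⟩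
    have hβ0 : (0:ℝ) < β := by linarith
    refine ⟨β * (1 + α), by nlinarith, fun a ha => ?_, fun b hb => ?_⟩
    · have h1 := (h a a).2
      have h2 := dbl_self_le ha
      have h3 := infDist_le_dbl hB a
      simp only at h1
      nlinarith [infDist_nonneg (x := a) (s := B)]
    · have h1 := (h b b).1
      have h2 := dbl_self_le hb
      have h3 := infDist_le_dbl hA b
      simp only at h1
      have h4 : (1/β) * (⨅ z : A, (dist b (z : X) + 1 + dist (z : X) b)) ≤ 1 + α := by
        linarith
      have h5 : (⨅ z : A, (dist b (z : X) + 1 + dist (z : X) b)) ≤ β * (1 + α) := by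
        have := mul_le_mul_of_nonneg_left h4 hβ0.le
        rw [← mul_assoc, mul_one_div_cancel hβ0.ne', one_mul] at this
        linarith
      nlinarith [infDist_nonneg (x := b) (s := A)]
  · rintro ⟨C, hC, hAB, hBA⟩
    refine ⟨2 * C + 1, by linarith, 1, le_refl 1, fun x y => ?_⟩
    have h1 := dbl_key hA hB hAB x y
    have h2 := dbl_key hB hA hBA x y
    constructor <;> simp only <;> linarith
end

section
/- In M(X), every idempotent is selfadjoint: if a ∈ M(X) satisfies a² = a, then a* = a. -/
open Metric

/-- every idempotent in `M(X)` is selfadjoint: if `d ∘ d ~ d`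
then `d* ~ d`. -/
theorem statement12 {X : Type*} [MetricSpace X] [Nonempty X] (d : CrossMetric X X)
    (h : QI (compFun d.k d.k) d.k) : QI (adjFun d.k) d.k := by
  obtain ⟨α, hα, β, hβ, hqi⟩ := h
  have hβ0 : (0:ℝ) < β := lt_of_lt_of_le one_pos hβ
  have hk0 : ∀ x y, 0 ≤ d.k x y := by
    intro x y
    have := d.cross_left x x y
    simp [dist_self] at this
    linarith
  -- the composition is bounded above by an affine function of k
  have hcomp : ∀ x y, compFun d.k d.k x y ≤ β * (d.k x y + α) := by
    intro x y
    have h1 := (hqi x y).1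
    have h2 : (1/β) * compFun d.k d.k x y ≤ d.k x y + α := by linarith
    have h3 := mul_le_mul_of_nonneg_left h2 hβ0.le
    calc compFun d.k d.k x y = β * ((1/β) * compFun d.k d.k x y) := by
          field_simp
      _ ≤ β * (d.k x y + α) := h3
  -- approximate midpoints
  have hmid : ∀ x y, ∃ c, d.k x c + d.k c y ≤ β * (d.k x y + α) + 1 := by
    intro x y
    have h1 : compFun d.k d.k x y < β * (d.k x y + α) + 1 :=
      lt_of_le_of_lt (hcomp x y) (by linarith)
    rw [compFun] at h1
    obtain ⟨c, hc⟩ := exists_lt_of_ciInf_lt h1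
    exact ⟨c, hc.le⟩
  set α' : ℝ := 7*(β+2)*(α*β+1) with hα'def
  set β' : ℝ := 7*β*(1+β) with hβ'def
  have hα'pos : 0 < α' := by nlinarith [mul_pos hα hβ0]
  have hβ'1 : (1:ℝ) ≤ β' := by nlinarith
  have hβ'pos : (0:ℝ) < β' := lt_of_lt_of_le one_pos hβ'1
  have key : ∀ a b, d.k b a ≤ α' + β' * d.k a b := by
    intro a b
    obtain ⟨w, hw⟩ := hmid a b
    obtain ⟨u, hu⟩ := hmid a w
    obtain ⟨v, hv⟩ := hmid w b
    set m := d.k a b with hm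
    set S : ℝ := β * (m + α) + 1 with hS
    set T : ℝ := β * (S + α) + 1 with hT
    have hkaw : d.k a w ≤ S := by have := hk0 w b; linarith
    have hkwb : d.k w b ≤ S := by have := hk0 a w; linarith
    have hTu : d.k a u + d.k u w ≤ T := by
      have : β * (d.k a w + α) ≤ β * (S + α) :=
        mul_le_mul_of_nonneg_left (by linarith) hβ0.le
      linarith
    have hTv : d.k w v + d.k v b ≤ T := by
      have : β * (d.k w b + α) ≤ β * (S + α) :=
        mul_le_mul_of_nonneg_left (by linarith) hβ0.le
      linarith
    have h4 := d.cross_left u a w   -- dist u a ≤ k u w + k a w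
    have h5 := d.cross_right a u w  -- dist u w ≤ k a u + k a w
    have h6 := dist_triangle a u w
    have h7 := d.cross_right w v b  -- dist v b ≤ k w v + k w b
    have h8 := d.cross_left w v b   -- dist w v ≤ k w b + k v b
    have h9 := dist_triangle w v b
    have h10 := dist_triangle a w b
    have h11 := d.tri_left b a a    -- k b a ≤ dist b a + k a a
    have h12 := d.tri_right a a w   -- k a a ≤ k a w + dist w a
    have e1 : dist a u = dist u a := dist_comm a u
    have e2 : dist b a = dist a b := dist_comm b a
    have e3 : dist w a = dist a w := dist_comm w a
    have hku1 := hk0 a u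
    have hku2 := hk0 u w
    have hkv1 := hk0 w v
    have hkv2 := hk0 v b
    have hm0 := hk0 a b
    -- k b a ≤ dist a b + k a w + dist a w ≤ 7S + 6T ≤ α' + β' * m
    have hbound : d.k b a ≤ 7*S + 6*T := by linarith
    have hfin : 7*S + 6*T ≤ α' + β' * m := by nlinarith
    linarith
  refine ⟨α', hα'pos, β', hβ'1, fun x y => ?_⟩
  simp only [adjFun]
  have h1 := key y x  -- k x y ≤ α' + β' * k y x
  have h2 := key x y  -- k y x ≤ α' + β' * k x y
  constructor
  · have e1 : (1/β') * d.k y x ≤ (1/β') * (α' + β' * d.k x y) :=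
      mul_le_mul_of_nonneg_left h2 (by positivity)
    have e2 : (1/β') * (α' + β' * d.k x y) = α'/β' + d.k x y := by
      field_simp
    have e3 : α'/β' ≤ α' := div_le_self hα'pos.le hβ'1
    linarith
  · exact h1
end

section
/- Fix x_0 ∈ X and let e_0 be the metric on the double of X given by e_0(x,y') = d_X(x,x_0) + 1 + d_X(x_0,y). Then for any metric d on the double of X, both d ∘ e_0 and e_0 ∘ d are quasi-isometric to e_0; in fact e_0(x,z') - d(x_0,x_0') ≤ (e_0 ∘ d)(x,z') ≤ e_0(x,z') + d(x_0,x_0') for all x,z ∈ X. Hence [e_0] is a two-sided zero element of M(X). -/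
open Metric

/-- with `e_0(x,y') = d(x,x_0) + 1 + d(x_0,y)`, for every metric `d` on
the double of `X` both `d ∘ e_0` and `e_0 ∘ d` are quasi-isometric to `e_0`, and in fact
`e_0(x,z') - d(x_0,x_0') ≤ (e_0 ∘ d)(x,z') ≤ e_0(x,z') + d(x_0,x_0')`.
Hence `[e_0]` is a two-sided zero of `M(X)`. -/
theorem statement14 {X : Type*} [MetricSpace X] [Nonempty X] (x0 : X)
    (d : CrossMetric X X) :
    let e0 : X → X → ℝ := fun x y => dist x x0 + 1 + dist x0 y
    QI (compFun d.k e0) e0 ∧ QI (compFun e0 d.k) e0 ∧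
    (∀ x z, e0 x z - d.k x0 x0 ≤ compFun e0 d.k x z ∧
      compFun e0 d.k x z ≤ e0 x z + d.k x0 x0) := by
  intro e0
  obtain ⟨ε, εpos, hsep⟩ := d.sep
  set c := d.k x0 x0 with hcdef
  have hc : 0 < c := lt_of_lt_of_le εpos (hsep x0 x0)
  -- A = compFun e0 d.k : inf_y (d.k x y + e0 y z)
  have hA_lb : ∀ x z y, e0 x z - c ≤ d.k x y + e0 y z := by
    intro x z y
    have h1 : dist x x0 ≤ d.k x y + d.k x0 y := d.cross_left x x0 y
    have h2 : d.k x0 y ≤ d.k x0 x0 + dist x0 y := d.tri_right x0 y x0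
    have h3 : dist x0 y = dist y x0 := dist_comm _ _
    simp only [e0]
    linarith
  have hAlb : ∀ x z, e0 x z - c ≤ compFun e0 d.k x z := by
    intro x z
    exact le_ciInf (hA_lb x z)
  have hAub : ∀ x z, compFun e0 d.k x z ≤ e0 x z + c := by
    intro x z
    have hbdd : BddBelow (Set.range fun y => d.k x y + e0 y z) := by
      refine ⟨e0 x z - c, ?_⟩
      rintro r ⟨y, rfl⟩
      exact hA_lb x z y
    have h0 : compFun e0 d.k x z ≤ d.k x x0 + e0 x0 z := ciInf_le hbdd x0
    have h1 : d.k x x0 ≤ dist x x0 + d.k x0 x0 := d.tri_left x x0 x0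
    have h2 : dist x0 x0 = 0 := dist_self x0
    simp only [e0] at h0 ⊢
    linarith
  -- B = compFun d.k e0 : inf_y (e0 x y + d.k y z)
  have hB_lb : ∀ x z y, e0 x z - c ≤ e0 x y + d.k y z := by
    intro x z y
    have h1 : d.k x0 z ≤ dist x0 y + d.k y z := d.tri_left x0 y z
    have h2 : dist x0 z ≤ d.k x0 x0 + d.k x0 z := d.cross_right x0 x0 z
    simp only [e0]
    linarith
  have hBlb : ∀ x z, e0 x z - c ≤ compFun d.k e0 x z := by
    intro x z
    exact le_ciInf (hB_lb x z)
  have hBub : ∀ x z, compFun d.k e0 x z ≤ e0 x z + c := by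
    intro x z
    have hbdd : BddBelow (Set.range fun y => e0 x y + d.k y z) := by
      refine ⟨e0 x z - c, ?_⟩
      rintro r ⟨y, rfl⟩
      exact hB_lb x z y
    have h0 : compFun d.k e0 x z ≤ e0 x x0 + d.k x0 z := ciInf_le hbdd x0
    have h1 : d.k x0 z ≤ d.k x0 x0 + dist x0 z := d.tri_right x0 z x0
    have h2 : dist x0 x0 = 0 := dist_self x0
    simp only [e0] at h0 ⊢
    linarith
  refine ⟨⟨c, hc, 1, le_refl 1, fun x z => ?_⟩,
          ⟨c, hc, 1, le_refl 1, fun x z => ?_⟩,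
          fun x z => ⟨hAlb x z, hAub x z⟩⟩
  · constructor
    · have := hBub x z; norm_num; linarith
    · have := hBlb x z; linarith
  · constructor
    · have := hAub x z; norm_num; linarith
    · have := hAlb x z; linarith
end

section
/- Let A, B ⊆ X and x_0 ∈ X. Suppose there exists β ≥ 1 such that for all R > 0, d_X(A \ B_R(x_0), B \ B_R(x_0)) > R/β, where B_R(x_0) is the ball of radius R around x_0. Then d_A ∘ d_B is quasi-isometric to e_0, i.e., [d_A][d_B] = [e_0] in M(X). -/
open Metric

/-- if for some `β ≥ 1`, for every `R > 0` the parts of `A` and `B`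
outside the ball `B_R(x_0)` are at distance `> R/β` from each other, then
`d_A ∘ d_B ~ e_0`. -/
theorem statement16 {X : Type*} [MetricSpace X] [Nonempty X] (x0 : X) (A B : Set X)
    (hA : A.Nonempty) (hB : B.Nonempty)
    (h : ∃ β ≥ (1:ℝ), ∀ R > (0:ℝ), ∀ a ∈ A \ Metric.ball x0 R,
      ∀ b ∈ B \ Metric.ball x0 R, R / β < dist a b) :
    QI (compFun (fun x y => ⨅ z : A, (dist x (z : X) + 1 + dist (z : X) y))
          (fun x y => ⨅ z : B, (dist x (z : X) + 1 + dist (z : X) y)))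
       (fun x y => dist x x0 + 1 + dist x0 y) := by
  obtain ⟨β, hβ, hsep⟩ := h
  obtain ⟨a0, ha0⟩ := hA
  obtain ⟨b0, hb0⟩ := hB
  haveI : Nonempty A := ⟨⟨a0, ha0⟩⟩
  haveI : Nonempty B := ⟨⟨b0, hb0⟩⟩
  have hβ0 : (0:ℝ) < β := lt_of_lt_of_le one_pos hβ
  -- key geometric claim
  have key : ∀ a ∈ A, ∀ b ∈ B, dist a x0 + dist b x0 ≤ (2*β+1) * dist a b := by
    intro a ha b hb
    set R := min (dist a x0) (dist b x0) with hR
    have hsum : dist a x0 + dist b x0 ≤ 2*R + dist a b := by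
      rcases min_le_iff.mpr (Or.inl (le_refl (dist a x0))) with _
      rcases le_total (dist a x0) (dist b x0) with h1 | h1
      · have ht := dist_triangle b a x0
        have : R = dist a x0 := min_eq_left h1
        rw [dist_comm b a] at ht
        linarith
      · have ht := dist_triangle a b x0
        have : R = dist b x0 := min_eq_right h1
        linarith
    rcases le_or_gt R 0 with hR0 | hR0
    · have h1 : 0 ≤ dist a x0 := dist_nonneg
      have h2 : 0 ≤ dist b x0 := dist_nonneg
      have h3 : 0 ≤ dist a b := dist_nonneg
      have hRmin : R ≤ dist a x0 := min_le_left _ _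
      nlinarith
    · have hna : a ∈ A \ Metric.ball x0 R := by
        refine ⟨ha, ?_⟩
        simp only [Metric.mem_ball, not_lt]
        exact min_le_left _ _
      have hnb : b ∈ B \ Metric.ball x0 R := by
        refine ⟨hb, ?_⟩
        simp only [Metric.mem_ball, not_lt]
        exact min_le_right _ _
      have hd := hsep R hR0 a hna b hnb
      have hd' : R < β * dist a b := by
        rw [div_lt_iff₀ hβ0] at hd
        linarith [mul_comm β (dist a b)]
      have h3 : 0 ≤ dist a b := dist_nonneg
      nlinarith
  -- bounds on the inner infima
  have bddA : ∀ x y : X, BddBelow (Set.range fun z : A => dist x (z:X) + 1 + dist (z:X) y) := by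
    intro x y
    refine ⟨1, ?_⟩
    rintro r ⟨z, rfl⟩
    have := dist_nonneg (x := x) (y := (z:X))
    have := dist_nonneg (x := (z:X)) (y := y)
    simp only
    linarith
  have bddB : ∀ x y : X, BddBelow (Set.range fun z : B => dist x (z:X) + 1 + dist (z:X) y) := by
    intro x y
    refine ⟨1, ?_⟩
    rintro r ⟨z, rfl⟩
    have := dist_nonneg (x := x) (y := (z:X))
    have := dist_nonneg (x := (z:X)) (y := y)
    simp only
    linarith
  have A_le : ∀ (x y : X) (a : A),
      (⨅ z : A, (dist x (z:X) + 1 + dist (z:X) y)) ≤ dist x (a:X) + 1 + dist (a:X) y :=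
    fun x y a => ciInf_le (bddA x y) a
  have B_le : ∀ (x y : X) (b : B),
      (⨅ z : B, (dist x (z:X) + 1 + dist (z:X) y)) ≤ dist x (b:X) + 1 + dist (b:X) y :=
    fun x y b => ciInf_le (bddB x y) b
  have A_ge : ∀ x y : X, (1:ℝ) ≤ ⨅ z : A, (dist x (z:X) + 1 + dist (z:X) y) := by
    intro x y
    refine le_ciInf fun z => ?_
    have := dist_nonneg (x := x) (y := (z:X))
    have := dist_nonneg (x := (z:X)) (y := y)
    linarith
  have B_ge : ∀ x y : X, (1:ℝ) ≤ ⨅ z : B, (dist x (z:X) + 1 + dist (z:X) y) := by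
    intro x y
    refine le_ciInf fun z => ?_
    have := dist_nonneg (x := x) (y := (z:X))
    have := dist_nonneg (x := (z:X)) (y := y)
    linarith
  set α : ℝ := dist x0 b0 + 2 + dist b0 a0 + dist a0 x0 + 1 with hα
  have hαpos : 0 < α := by
    have := dist_nonneg (x := x0) (y := b0)
    have := dist_nonneg (x := b0) (y := a0)
    have := dist_nonneg (x := a0) (y := x0)
    rw [hα]; linarith
  refine ⟨α, hαpos, 2*β+1, by linarith, fun x z => ?_⟩
  simp only [compFun]
  set D1 : ℝ := ⨅ y : X,
      ((⨅ z : B, (dist x (z:X) + 1 + dist (z:X) y)) +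
        ⨅ w : A, (dist y (w:X) + 1 + dist (w:X) z)) with hD1
  have bddC : BddBelow (Set.range fun y : X =>
      (⨅ z : B, (dist x (z:X) + 1 + dist (z:X) y)) +
        ⨅ w : A, (dist y (w:X) + 1 + dist (w:X) z)) := by
    refine ⟨2, ?_⟩
    rintro r ⟨y, rfl⟩
    have := B_ge x y
    have := A_ge y z
    simp only
    linarith
  have hD1ge : (2:ℝ) ≤ D1 := by
    rw [hD1]
    refine le_ciInf fun y => ?_
    have := B_ge x y
    have := A_ge y z
    linarith
  -- upper bound on D1
  have hD1le : D1 ≤ dist x x0 + 1 + dist x0 z + (α - 1) := by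
    have h1 : D1 ≤ (⨅ w : B, (dist x (w:X) + 1 + dist (w:X) b0)) +
        ⨅ w : A, (dist b0 (w:X) + 1 + dist (w:X) z) := ciInf_le bddC b0
    have h2 := B_le x b0 ⟨b0, hb0⟩
    have h3 := A_le b0 z ⟨a0, ha0⟩
    have h4 := dist_triangle x x0 b0
    have h5 := dist_triangle a0 x0 z
    simp only [dist_self] at h2
    rw [hα]
    have hb0a0 : dist b0 a0 = dist b0 a0 := rfl
    calc D1 ≤ _ := h1
      _ ≤ (dist x b0 + 1 + 0) + (dist b0 a0 + 1 + dist a0 z) := by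
          exact add_le_add h2 h3
      _ ≤ dist x x0 + 1 + dist x0 z + (dist x0 b0 + 2 + dist b0 a0 + dist a0 x0 + 1 - 1) := by
          have := dist_comm x0 b0
          have := dist_comm a0 x0
          have h5' : dist a0 z ≤ dist a0 x0 + dist x0 z := dist_triangle a0 x0 z
          have h4' : dist x b0 ≤ dist x x0 + dist x0 b0 := dist_triangle x x0 b0
          linarith
  -- lower bound: e0 ≤ (2β+1) D1
  have hlow : dist x x0 + 1 + dist x0 z ≤ (2*β+1) * D1 := by
    have hc : (dist x x0 + 1 + dist x0 z) / (2*β+1) ≤ D1 := by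
      rw [hD1]
      refine le_ciInf fun y => ?_
      have goal1 : (dist x x0 + 1 + dist x0 z) / (2*β+1) -
          (⨅ w : A, (dist y (w:X) + 1 + dist (w:X) z)) ≤
          ⨅ w : B, (dist x (w:X) + 1 + dist (w:X) y) := by
        refine le_ciInf fun b => ?_
        rw [sub_le_iff_le_add]
        have goal2 : (dist x x0 + 1 + dist x0 z) / (2*β+1) -
            (dist x (b:X) + 1 + dist (b:X) y) ≤
            ⨅ w : A, (dist y (w:X) + 1 + dist (w:X) z) := by
          refine le_ciInf fun a => ?_
          rw [sub_le_iff_le_add]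
          rw [div_le_iff₀ (by linarith : (0:ℝ) < 2*β+1)]
          have hk := key (a:X) a.2 (b:X) b.2
          have t1 : dist x x0 ≤ dist x (b:X) + dist (b:X) x0 := dist_triangle _ _ _
          have t2 : dist x0 z ≤ dist x0 (a:X) + dist (a:X) z := dist_triangle _ _ _
          have t3 : dist (b:X) (a:X) ≤ dist (b:X) y + dist y (a:X) := dist_triangle _ _ _
          have t4 : dist x0 (a:X) = dist (a:X) x0 := dist_comm _ _
          have t5 : dist (a:X) (b:X) = dist (b:X) (a:X) := dist_comm _ _
          have n1 : (0:ℝ) ≤ dist x (b:X) := dist_nonneg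
          have n2 : (0:ℝ) ≤ dist (a:X) z := dist_nonneg
          have n3 : (0:ℝ) ≤ dist (b:X) y := dist_nonneg
          have n4 : (0:ℝ) ≤ dist y (a:X) := dist_nonneg
          have n5 : (0:ℝ) ≤ dist (b:X) (a:X) := dist_nonneg
          nlinarith
        linarith [goal2]
      linarith [goal1]
    rw [div_le_iff₀ (by linarith : (0:ℝ) < 2*β+1)] at hc
    linarith [mul_comm D1 (2*β+1)]
  constructor
  · have h1 : (1/(2*β+1)) * D1 ≤ D1 := by
      have hD1pos : (0:ℝ) ≤ D1 := by linarith
      have : 1/(2*β+1) ≤ 1 := by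
        rw [div_le_one (by linarith : (0:ℝ) < 2*β+1)]; linarith
      nlinarith
    linarith
  · linarith
end

section
/- Let X be a nonempty closed subset of [0,∞) with the induced metric. Then every metric d on the double of X is quasi-isometric to its adjoint d*, and every selfadjoint metric on the double of X is idempotent (d ∘ d quasi-isometric to d). Consequently, every element of M(X) is a selfadjoint idempotent and M(X) is commutative. -/
open Metric

lemma CrossMetric.k_pos {X Y : Type*} [MetricSpace X] [MetricSpace Y]
    (d : CrossMetric X Y) (x : X) (y : Y) : 0 < d.k x y := by
  obtain ⟨ε, hε, h⟩ := d.sep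
  exact lt_of_lt_of_le hε (h x y)

/-- Key lemma: for `X ⊆ ℝ` with minimum `m`, `|x - y| ≤ d(x,y) + d(m,m)`. -/
lemma key_lemma {S : Set ℝ} (d : CrossMetric S S) (m : S)
    (hm : ∀ z : S, (m : ℝ) ≤ (z : ℝ)) (x y : S) :
    |(x : ℝ) - (y : ℝ)| ≤ d.k x y + d.k m m := by
  have e1 : dist x m = (x : ℝ) - (m : ℝ) := by
    rw [Subtype.dist_eq, Real.dist_eq, abs_of_nonneg (sub_nonneg.mpr (hm x))]
  have e2 : dist y m = (y : ℝ) - (m : ℝ) := by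
    rw [Subtype.dist_eq, Real.dist_eq, abs_of_nonneg (sub_nonneg.mpr (hm y))]
  rw [abs_sub_le_iff]
  constructor
  · have h1 : dist x m ≤ d.k x m + d.k m m := d.cross_left x m m
    have h2 : d.k x m ≤ d.k x y + dist y m := d.tri_right x m y
    rw [e1] at h1
    rw [e2] at h2
    linarith
  · have h1 : dist y m ≤ d.k x y + d.k x m := d.cross_right x y m
    have h2 : d.k x m ≤ dist x m + d.k m m := d.tri_left x m m
    rw [e2] at h1
    rw [e1] at h2
    linarith

/-- The adjoint is dominated: `d(y,x) ≤ 3 d(x,y) + 2 d(m,m)`. -/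
lemma adj_le {S : Set ℝ} (d : CrossMetric S S) (m : S)
    (hm : ∀ z : S, (m : ℝ) ≤ (z : ℝ)) (x y : S) :
    d.k y x ≤ 3 * d.k x y + 2 * d.k m m := by
  have h1 : d.k y x ≤ d.k y y + dist y x := d.tri_right y x y
  have h2 : d.k y y ≤ dist y x + d.k x y := d.tri_left y x y
  have h3 : dist y x ≤ d.k x y + d.k m m := by
    rw [Subtype.dist_eq, Real.dist_eq, abs_sub_comm]
    exact key_lemma d m hm x y
  linarith

lemma comp_swap {S : Set ℝ} [Nonempty S] (d ρ : CrossMetric S S) (m : S)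
    (hm : ∀ z : S, (m : ℝ) ≤ (z : ℝ)) (x z : S) :
    compFun ρ.k d.k x z ≤ 7 * compFun d.k ρ.k x z + (6 * d.k m m + 2 * ρ.k m m) := by
  have hA : compFun d.k ρ.k x z = ⨅ y : S, (ρ.k x y + d.k y z) := rfl
  have hB : compFun ρ.k d.k x z = ⨅ y : S, (d.k x y + ρ.k y z) := rfl
  have bdd : BddBelow (Set.range fun y : S => d.k x y + ρ.k y z) := by
    refine ⟨0, ?_⟩
    rintro r ⟨y, rfl⟩
    have := d.k_pos x y
    have := ρ.k_pos y z
    dsimp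
    linarith
  have H : ∀ y : S, compFun ρ.k d.k x z
      ≤ 7 * (ρ.k x y + d.k y z) + (6 * d.k m m + 2 * ρ.k m m) := by
    intro y
    have hBy : compFun ρ.k d.k x z ≤ d.k x y + ρ.k y z := by
      rw [hB]; exact ciInf_le bdd y
    have e1 : dist x y ≤ ρ.k x y + ρ.k m m := by
      rw [Subtype.dist_eq, Real.dist_eq]; exact key_lemma ρ m hm x y
    have e2 : dist y z ≤ d.k y z + d.k m m := by
      rw [Subtype.dist_eq, Real.dist_eq]; exact key_lemma d m hm y z
    have f3 : d.k x y ≤ dist x y + d.k y y := d.tri_left x y y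
    have f4 : d.k y y ≤ dist y z + d.k z y := d.tri_left y z y
    have f5 : d.k z y ≤ d.k z z + dist z y := d.tri_right z y z
    have f6 : d.k z z ≤ dist z y + d.k y z := d.tri_left z y z
    have f7 : ρ.k y z ≤ dist y z + ρ.k z z := ρ.tri_left y z z
    have f8 : ρ.k z z ≤ dist z x + ρ.k x z := ρ.tri_left z x z
    have f9 : ρ.k x z ≤ ρ.k x y + dist y z := ρ.tri_right x z y
    have f10 : dist z x ≤ dist z y + dist y x := dist_triangle z y x
    have c1 : dist z y = dist y z := dist_comm _ _
    have c2 : dist y x = dist x y := dist_comm _ _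
    have p1 := ρ.k_pos x y
    linarith
  have h7 : (compFun ρ.k d.k x z - (6 * d.k m m + 2 * ρ.k m m)) / 7
      ≤ compFun d.k ρ.k x z := by
    rw [hA]
    exact le_ciInf (fun y => by have := H y; linarith)
  linarith

/-- for a nonempty closed subset `X ⊆ [0,∞)` of the half-line with the
induced metric, every metric on the double of `X` is quasi-isometric to its adjoint,
every selfadjoint metric on the double is idempotent, and `M(X)` is commutative. -/
theorem statement17 (S : Set ℝ) (hS : S ⊆ Set.Ici (0:ℝ)) (hSc : IsClosed S)
    (hne : S.Nonempty) :
    (∀ d : CrossMetric S S, QI (adjFun d.k) d.k) ∧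
    (∀ d : CrossMetric S S, (∀ x y, d.k x y = d.k y x) → QI (compFun d.k d.k) d.k) ∧
    (∀ d ρ : CrossMetric S S, QI (compFun d.k ρ.k) (compFun ρ.k d.k)) := by
  haveI : Nonempty S := hne.to_subtype
  have hbdd : BddBelow S := ⟨0, fun x hx => hS hx⟩
  have hmem : sInf S ∈ S := hSc.csInf_mem hne hbdd
  set m : S := ⟨sInf S, hmem⟩ with hmdef
  have hm : ∀ z : S, (m : ℝ) ≤ (z : ℝ) := fun z => csInf_le hbdd z.2
  refine ⟨?_, ?_, ?_⟩
  · -- adjoint is quasi-isometric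
    intro d
    refine ⟨2 * d.k m m, by linarith [d.k_pos m m], 3, by norm_num, fun x y => ?_⟩
    simp only [adjFun]
    have h1 := adj_le d m hm x y
    have h2 := adj_le d m hm y x
    have h3 := d.k_pos m m
    constructor <;> linarith
  · -- idempotence
    intro d _
    refine ⟨d.k m m, d.k_pos m m, 3, by norm_num, fun x z => ?_⟩
    have hI : compFun d.k d.k x z = ⨅ y : S, (d.k x y + d.k y z) := rfl
    have bdd : BddBelow (Set.range fun y : S => d.k x y + d.k y z) := by
      refine ⟨0, ?_⟩
      rintro r ⟨y, rfl⟩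
      have := d.k_pos x y
      have := d.k_pos y z
      dsimp
      linarith
    have hub : compFun d.k d.k x z ≤ d.k x z + d.k z z := by
      rw [hI]; exact ciInf_le bdd z
    have hzz : d.k z z ≤ dist z x + d.k x z := d.tri_left z x z
    have hdist : dist z x ≤ d.k x z + d.k m m := by
      rw [Subtype.dist_eq, Real.dist_eq, abs_sub_comm]
      exact key_lemma d m hm x z
    have hlb : d.k x z - d.k m m ≤ compFun d.k d.k x z := by
      rw [hI]
      refine le_ciInf (fun y => ?_)
      have h1 : d.k x z ≤ d.k x y + dist y z := d.tri_right x z y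
      have h2 : dist y z ≤ d.k y z + d.k m m := by
        rw [Subtype.dist_eq, Real.dist_eq]
        exact key_lemma d m hm y z
      linarith
    have hnn : (0 : ℝ) ≤ compFun d.k d.k x z := by
      rw [hI]
      refine le_ciInf (fun y => ?_)
      have := d.k_pos x y
      have := d.k_pos y z
      linarith
    have hc := d.k_pos m m
    constructor <;> linarith
  · -- commutativity
    intro d ρ
    refine ⟨6 * (d.k m m + ρ.k m m), by nlinarith [d.k_pos m m, ρ.k_pos m m],
      7, by norm_num, fun x z => ?_⟩
    have h1 := comp_swap d ρ m hm x z
    have h2 := comp_swap ρ d m hm x z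
    have h3 := d.k_pos m m
    have h4 := ρ.k_pos m m
    constructor <;> linarith
end

section
/- If the Gromov–Hausdorff distance between metric spaces X and Y is finite, then the inverse semigroups M(X) and M(Y) are isomorphic; explicitly, choosing ρ ∈ M(X,Y) with finite Hausdorff distance between X and Y, the maps d ↦ ρ ∘ d ∘ ρ* and b ↦ ρ* ∘ b ∘ ρ induce mutually inverse semigroup isomorphisms between M(X) and M(Y). -/
open Metric

section Helpers

variable {X Y Z : Type*}

theorem adjFun_apply (d : X → Y → ℝ) (y : Y) (x : X) : adjFun d y x = d x y := rfl

/-- A lower bound on all terms of a composition gives a lower bound on the composition. -/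
theorem le_comp [Nonempty Y] {ρ : Y → Z → ℝ} {d : X → Y → ℝ} {x : X} {z : Z} {m : ℝ}
    (h : ∀ y, m ≤ d x y + ρ y z) : m ≤ compFun ρ d x z :=
  le_ciInf h

theorem le_comp_add [Nonempty Y] {ρ : Y → Z → ℝ} {d : X → Y → ℝ} {x : X} {z : Z} {m c : ℝ}
    (h : ∀ y, m ≤ d x y + ρ y z + c) : m ≤ compFun ρ d x z + c := by
  have : m - c ≤ compFun ρ d x z := le_comp fun y => by linarith [h y]
  linarith

/-- A composition is at most any of its terms (components uniformly bounded below). -/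
theorem comp_le_s18 {ρ : Y → Z → ℝ} {d : X → Y → ℝ} {m₁ m₂ : ℝ}
    (h1 : ∀ x y, m₁ ≤ d x y) (h2 : ∀ y z, m₂ ≤ ρ y z) (x : X) (z : Z) (y : Y) :
    compFun ρ d x z ≤ d x y + ρ y z :=
  ciInf_le ⟨m₁ + m₂, by rintro t ⟨y', rfl⟩; exact add_le_add (h1 x y') (h2 y' z)⟩ y

/-- Uniform lower bounds propagate through composition. -/
theorem comp_lb [Nonempty Y] {ρ : Y → Z → ℝ} {d : X → Y → ℝ} {m₁ m₂ : ℝ}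
    (h1 : ∀ x y, m₁ ≤ d x y) (h2 : ∀ y z, m₂ ≤ ρ y z) (x : X) (z : Z) :
    m₁ + m₂ ≤ compFun ρ d x z :=
  le_comp fun y => add_le_add (h1 x y) (h2 y z)

end Helpers

/-- The adjoint of a cross-metric is a cross-metric. -/
def CrossMetric.adj {X Y : Type*} [MetricSpace X] [MetricSpace Y]
    (ρ : CrossMetric X Y) : CrossMetric Y X where
  k := adjFun ρ.k
  sep := by obtain ⟨e, he, h⟩ := ρ.sep; exact ⟨e, he, fun y x => h x y⟩
  tri_left := fun y y' x => by
    have := ρ.tri_right x y y'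
    simp only [adjFun_apply]
    rw [dist_comm] at this; linarith
  tri_right := fun y x x' => by
    have := ρ.tri_left x x' y
    simp only [adjFun_apply]
    rw [dist_comm] at this; linarith
  cross_left := fun y y' x => ρ.cross_right x y y'
  cross_right := fun y x x' => ρ.cross_left x x' y

/-- The first (multiplicativity) statement, proved for a general cross-metric,
only using that every point of `X` is within `C` of `Y`. -/
theorem keyA {X Y : Type*} [MetricSpace X] [MetricSpace Y]
    [Nonempty X] [Nonempty Y] (ρ : CrossMetric X Y) {C : ℝ} (hCpos : 0 < C)
    (hC1 : ∀ x, (⨅ y, ρ.k x y) < C) (d1 d2 : CrossMetric X X) :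
    QI (compFun ρ.k (compFun (compFun d1.k d2.k) (adjFun ρ.k)))
       (compFun (compFun ρ.k (compFun d1.k (adjFun ρ.k)))
                (compFun ρ.k (compFun d2.k (adjFun ρ.k)))) := by
  obtain ⟨e, hep, he⟩ := ρ.sep
  obtain ⟨e1, he1p, he1⟩ := d1.sep
  obtain ⟨e2, he2p, he2⟩ := d2.sep
  have ha : ∀ (y : Y) (x : X), e ≤ adjFun ρ.k y x := fun y x => he x y
  -- abbreviations
  set c12 := compFun d1.k d2.k with hc12def
  set D := compFun c12 (adjFun ρ.k) with hDdef
  set L := compFun ρ.k D with hLdef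
  set I1 := compFun d1.k (adjFun ρ.k) with hI1def
  set I2 := compFun d2.k (adjFun ρ.k) with hI2def
  set A := compFun ρ.k I1 with hAdef
  set B := compFun ρ.k I2 with hBdef
  set R := compFun A B with hRdef
  -- uniform lower bounds
  have hc12 : ∀ x x', e2 + e1 ≤ c12 x x' := comp_lb he2 he1
  have hD : ∀ y x, e + (e2 + e1) ≤ D y x := comp_lb ha hc12
  have hI1 : ∀ y x, e + e1 ≤ I1 y x := comp_lb ha he1
  have hI2 : ∀ y x, e + e2 ≤ I2 y x := comp_lb ha he2
  have hA : ∀ y y', (e + e1) + e ≤ A y y' := comp_lb hI1 he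
  have hB : ∀ y y', (e + e2) + e ≤ B y y' := comp_lb hI2 he
  -- L ≤ R pointwise
  have hLR : ∀ y z, L y z ≤ R y z := by
    intro y z
    refine le_comp fun y' => ?_
    refine le_comp_add fun x₁ => ?_
    rw [add_assoc]
    refine le_comp_add fun x₁' => ?_
    have step2 : L y z - (adjFun ρ.k y x₁' + d2.k x₁' x₁ + ρ.k x₁ y') ≤ A y' z := by
      refine le_comp fun x₂ => ?_
      have step3 : L y z - (adjFun ρ.k y x₁' + d2.k x₁' x₁ + ρ.k x₁ y') - ρ.k x₂ z
          ≤ I1 y' x₂ := by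
        refine le_comp fun x₂' => ?_
        -- leaf estimate
        have l1 : L y z ≤ D y x₂ + ρ.k x₂ z := comp_le_s18 hD he y z x₂
        have l2 : D y x₂ ≤ adjFun ρ.k y x₁' + c12 x₁' x₂ := comp_le_s18 ha hc12 y x₂ x₁'
        have l3 : c12 x₁' x₂ ≤ d2.k x₁' x₁ + d1.k x₁ x₂ := comp_le_s18 he2 he1 x₁' x₂ x₁
        have l4 : d1.k x₁ x₂ ≤ dist x₁ x₂' + d1.k x₂' x₂ := d1.tri_left _ _ _
        have l5 : dist x₁ x₂' ≤ ρ.k x₁ y' + ρ.k x₂' y' := ρ.cross_left _ _ _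
        have hadj : adjFun ρ.k y' x₂' = ρ.k x₂' y' := rfl
        rw [hadj]
        linarith
      linarith
    linarith
  -- R ≤ L + 2C pointwise
  have hRL : ∀ y z, R y z ≤ L y z + 2 * C := by
    intro y z
    have main : R y z - 2 * C ≤ L y z := by
      refine le_comp fun x₂ => ?_
      have s1 : R y z - 2 * C - ρ.k x₂ z ≤ D y x₂ := by
        refine le_comp fun x₁' => ?_
        have s2 : R y z - 2 * C - ρ.k x₂ z - adjFun ρ.k y x₁' ≤ c12 x₁' x₂ := by
          refine le_comp fun u => ?_
          -- leaf estimate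
          obtain ⟨y', hy'⟩ : ∃ y', ρ.k u y' < C := exists_lt_of_ciInf_lt (hC1 u)
          have r1 : R y z ≤ B y y' + A y' z := comp_le_s18 hB hA y z y'
          have r2 : B y y' ≤ I2 y u + ρ.k u y' := comp_le_s18 hI2 he y y' u
          have r3 : I2 y u ≤ adjFun ρ.k y x₁' + d2.k x₁' u := comp_le_s18 ha he2 y u x₁'
          have r4 : A y' z ≤ I1 y' x₂ + ρ.k x₂ z := comp_le_s18 hI1 he y' z x₂
          have r5 : I1 y' x₂ ≤ adjFun ρ.k y' u + d1.k u x₂ := comp_le_s18 ha he1 y' x₂ u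
          have hadj : adjFun ρ.k y' u = ρ.k u y' := rfl
          rw [hadj] at r5
          linarith
        linarith
      linarith
    linarith
  -- conclude
  refine ⟨2 * C, by linarith, 1, le_refl 1, fun y z => ⟨?_, ?_⟩⟩
  · have h1 := hLR y z
    norm_num
    linarith
  · have h2 := hRL y z
    norm_num
    linarith

/-- The third (inverse) statement, proved for a general cross-metric,
only using that every point of `X` is within `C` of `Y`. -/
theorem keyB {X Y : Type*} [MetricSpace X] [MetricSpace Y]
    [Nonempty X] [Nonempty Y] (ρ : CrossMetric X Y) {C : ℝ} (hCpos : 0 < C)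
    (hC1 : ∀ x, (⨅ y, ρ.k x y) < C) (d : CrossMetric X X) :
    QI (compFun (adjFun ρ.k)
          (compFun (compFun ρ.k (compFun d.k (adjFun ρ.k))) ρ.k)) d.k := by
  obtain ⟨e, hep, he⟩ := ρ.sep
  obtain ⟨ed, hedp, hed⟩ := d.sep
  have ha : ∀ (y : Y) (x : X), e ≤ adjFun ρ.k y x := fun y x => he x y
  set I := compFun d.k (adjFun ρ.k) with hIdef
  set F := compFun ρ.k I with hFdef
  set E := compFun F ρ.k with hEdef
  set T := compFun (adjFun ρ.k) E with hTdef
  have hI : ∀ y x, e + ed ≤ I y x := comp_lb ha hed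
  have hF : ∀ y z, (e + ed) + e ≤ F y z := comp_lb hI he
  have hE : ∀ x z, e + ((e + ed) + e) ≤ E x z := comp_lb he hF
  -- d ≤ T
  have hdT : ∀ x x3, d.k x x3 ≤ T x x3 := by
    intro x x3
    refine le_comp fun z => ?_
    have s1 : d.k x x3 - adjFun ρ.k z x3 ≤ E x z := by
      refine le_comp fun y => ?_
      have s2 : d.k x x3 - adjFun ρ.k z x3 - ρ.k x y ≤ F y z := by
        refine le_comp fun x₁ => ?_
        have s3 : d.k x x3 - adjFun ρ.k z x3 - ρ.k x y - ρ.k x₁ z ≤ I y x₁ := by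
          refine le_comp fun x₂ => ?_
          -- leaf estimate
          have l1 : d.k x x3 ≤ dist x x₂ + d.k x₂ x3 := d.tri_left _ _ _
          have l2 : d.k x₂ x3 ≤ d.k x₂ x₁ + dist x₁ x3 := d.tri_right _ _ _
          have l3 : dist x x₂ ≤ ρ.k x y + ρ.k x₂ y := ρ.cross_left _ _ _
          have l4 : dist x₁ x3 ≤ ρ.k x₁ z + ρ.k x3 z := ρ.cross_left _ _ _
          have hadj1 : adjFun ρ.k y x₂ = ρ.k x₂ y := rfl
          have hadj2 : adjFun ρ.k z x3 = ρ.k x3 z := rfl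
          rw [hadj1]
          rw [hadj2] at *
          linarith
        linarith
      linarith
    linarith
  -- T ≤ d + 4C
  have hTd : ∀ x x3, T x x3 ≤ d.k x x3 + 4 * C := by
    intro x x3
    obtain ⟨y, hy⟩ : ∃ y, ρ.k x y < C := exists_lt_of_ciInf_lt (hC1 x)
    obtain ⟨z, hz⟩ : ∃ z, ρ.k x3 z < C := exists_lt_of_ciInf_lt (hC1 x3)
    have t1 : T x x3 ≤ E x z + adjFun ρ.k z x3 := comp_le_s18 hE ha x x3 z
    have t2 : E x z ≤ ρ.k x y + F y z := comp_le_s18 he hF x z y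
    have t3 : F y z ≤ I y x3 + ρ.k x3 z := comp_le_s18 hI he y z x3
    have t4 : I y x3 ≤ adjFun ρ.k y x + d.k x x3 := comp_le_s18 ha hed y x3 x
    have hadj1 : adjFun ρ.k z x3 = ρ.k x3 z := rfl
    have hadj2 : adjFun ρ.k y x = ρ.k x y := rfl
    rw [hadj1] at t1; rw [hadj2] at t4
    linarith
  refine ⟨4 * C, by linarith, 1, le_refl 1, fun x x3 => ⟨?_, ?_⟩⟩
  · have h1 := hTd x x3
    norm_num
    linarith
  · have h2 := hdT x x3
    norm_num
    linarith

/-- if the Gromov--Hausdorff distance between `X` and `Y` is finite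
(witnessed by a cross-metric `ρ ∈ M(X,Y)` with uniformly bounded distances to the
other space), then `d ↦ ρ ∘ d ∘ ρ*` and `b ↦ ρ* ∘ b ∘ ρ` are semigroup homomorphisms
(up to quasi-isometry) which are mutually inverse, so `M(X) ≅ M(Y)`. -/
theorem statement18 {X Y : Type*} [MetricSpace X] [MetricSpace Y]
    [Nonempty X] [Nonempty Y] (ρ : CrossMetric X Y)
    (hC : ∃ C > (0:ℝ), (∀ x, (⨅ y, ρ.k x y) < C) ∧ (∀ y, (⨅ x, ρ.k x y) < C)) :
    (∀ d1 d2 : CrossMetric X X,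
      QI (compFun ρ.k (compFun (compFun d1.k d2.k) (adjFun ρ.k)))
         (compFun (compFun ρ.k (compFun d1.k (adjFun ρ.k)))
                  (compFun ρ.k (compFun d2.k (adjFun ρ.k))))) ∧
    (∀ b1 b2 : CrossMetric Y Y,
      QI (compFun (adjFun ρ.k) (compFun (compFun b1.k b2.k) ρ.k))
         (compFun (compFun (adjFun ρ.k) (compFun b1.k ρ.k))
                  (compFun (adjFun ρ.k) (compFun b2.k ρ.k)))) ∧
    (∀ d : CrossMetric X X,
      QI (compFun (adjFun ρ.k)
            (compFun (compFun ρ.k (compFun d.k (adjFun ρ.k))) ρ.k)) d.k) ∧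
    (∀ b : CrossMetric Y Y,
      QI (compFun ρ.k
            (compFun (compFun (adjFun ρ.k) (compFun b.k ρ.k)) (adjFun ρ.k))) b.k) := by
  obtain ⟨C, hCpos, hC1, hC2⟩ := hC
  refine ⟨fun d1 d2 => keyA ρ hCpos hC1 d1 d2,
          fun b1 b2 => keyA ρ.adj hCpos (fun y => hC2 y) b1 b2,
          fun d => keyB ρ hCpos hC1 d,
          fun b => keyB ρ.adj hCpos (fun y => hC2 y) b⟩
end

section
/- If [d] ∈ M(X) is invertible (i.e., [d* ∘ d] = [d ∘ d*] = [I]), then there exists an almost isometry f: X → X such that [d^f] = [d], where d^f(x,y') = inf_{z∈X}[d_X(x,z) + C + d_X(f(z),y)] for a suitable constant C > 0. -/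
open Metric

/-- A map `f : X → X` is an almost isometry. -/
def AlmostIsometry {X : Type*} [MetricSpace X] (f : X → X) : Prop :=
  (∃ C > (0:ℝ), ∀ x x' : X,
    dist x x' - C ≤ dist (f x) (f x') ∧ dist (f x) (f x') ≤ dist x x' + C) ∧
  (∃ g : X → X, ∃ D > (0:ℝ), ∀ x, dist (g (f x)) x < D ∧ dist (f (g x)) x < D)

/-- if `[d]` is invertible in `M(X)` (i.e. `d* ∘ d ~ I ~ d ∘ d*`), then
`[d] = [d^f]` for some almost isometry `f`, where
`d^f(x,y') = inf_z [d(x,z) + C + d(f(z),y)]`. -/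
theorem statement19 {X : Type*} [MetricSpace X] [Nonempty X] (d : CrossMetric X X)
    (h1 : QI (compFun (adjFun d.k) d.k) (fun x y => dist x y + 1))
    (h2 : QI (compFun d.k (adjFun d.k)) (fun x y => dist x y + 1)) :
    ∃ f : X → X, AlmostIsometry f ∧ ∃ C > (0:ℝ),
      QI (fun x y => ⨅ z, (dist x z + C + dist (f z) y)) d.k := by
  classical
  obtain ⟨α₁, hα₁, β₁, hβ₁, H1⟩ := h1
  obtain ⟨α₂, hα₂, β₂, hβ₂, H2⟩ := h2
  have hb1 : (0:ℝ) < β₁ := lt_of_lt_of_le one_pos hβ₁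
  have hb2 : (0:ℝ) < β₂ := lt_of_lt_of_le one_pos hβ₂
  set K : ℝ := (β₁ * (1 + α₁) + 1) / 2 with hKdef
  set K₂ : ℝ := (β₂ * (1 + α₂) + 1) / 2 with hK2def
  have hKpos : 0 < K := by rw [hKdef]; nlinarith
  have hK2pos : 0 < K₂ := by rw [hK2def]; nlinarith
  have hf : ∀ x : X, ∃ y : X, d.k x y ≤ K := by
    intro x
    have h := (H1 x x).1
    simp only [compFun, adjFun, dist_self, zero_add] at h
    set c : ℝ := ⨅ y, (d.k x y + d.k x y) with hcdef
    have hc : β₁ * (1 / β₁ * c) = c := by field_simp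
    have h2 : 1 / β₁ * c ≤ 1 + α₁ := by linarith
    have h3 : c ≤ β₁ * (1 + α₁) := by
      nlinarith [mul_le_mul_of_nonneg_left h2 hb1.le]
    have h' : c < β₁ * (1 + α₁) + 1 := by linarith
    obtain ⟨y, hy⟩ := exists_lt_of_ciInf_lt h'
    exact ⟨y, by rw [hKdef]; linarith⟩
  choose f hfK using hf
  have hg : ∀ y : X, ∃ x : X, d.k x y ≤ K₂ := by
    intro y
    have h := (H2 y y).1
    simp only [compFun, adjFun, dist_self, zero_add] at h
    set c : ℝ := ⨅ x, (d.k x y + d.k x y) with hcdef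
    have hc : β₂ * (1 / β₂ * c) = c := by field_simp
    have h2 : 1 / β₂ * c ≤ 1 + α₂ := by linarith
    have h3 : c ≤ β₂ * (1 + α₂) := by
      nlinarith [mul_le_mul_of_nonneg_left h2 hb2.le]
    have h' : c < β₂ * (1 + α₂) + 1 := by linarith
    obtain ⟨x, hx⟩ := exists_lt_of_ciInf_lt h'
    exact ⟨x, by rw [hK2def]; linarith⟩
  choose g hgK using hg
  refine ⟨f, ⟨⟨2 * K, by linarith, ?_⟩, ⟨g, K + K₂ + 1, by linarith, ?_⟩⟩,
    K, hKpos, 2 * K + 2 * K₂ + 1, by linarith, 1, le_refl 1, ?_⟩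
  · intro x x'
    have t1 : d.k x (f x') ≤ dist x x' + d.k x' (f x') := d.tri_left x x' (f x')
    have t2 : dist (f x) (f x') ≤ d.k x (f x) + d.k x (f x') := d.cross_right x (f x) (f x')
    have t3 : d.k x' (f x) ≤ d.k x' (f x') + dist (f x') (f x) := d.tri_right x' (f x) (f x')
    have t4 : dist x x' ≤ d.k x (f x) + d.k x' (f x) := d.cross_left x x' (f x)
    have hdc : dist (f x') (f x) = dist (f x) (f x') := dist_comm _ _
    exact ⟨by linarith [hfK x, hfK x'], by linarith [hfK x, hfK x']⟩
  · intro x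
    have t1 : dist (g (f x)) x ≤ d.k (g (f x)) (f x) + d.k x (f x) :=
      d.cross_left (g (f x)) x (f x)
    have t2 : dist (f (g x)) x ≤ d.k (g x) (f (g x)) + d.k (g x) x :=
      d.cross_right (g x) (f (g x)) x
    exact ⟨by linarith [hgK (f x), hfK x], by linarith [hfK (g x), hgK x]⟩
  · intro x y
    have A : d.k x y ≤ ⨅ z, (dist x z + K + dist (f z) y) := by
      refine le_ciInf fun z => ?_
      have t1 : d.k x y ≤ dist x z + d.k z y := d.tri_left x z y
      have t2 : d.k z y ≤ d.k z (f z) + dist (f z) y := d.tri_right z y (f z)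
      linarith [hfK z]
    have hbdd : BddBelow (Set.range fun z => dist x z + K + dist (f z) y) := by
      refine ⟨0, ?_⟩
      rintro r ⟨z, rfl⟩
      dsimp only
      have := dist_nonneg (x := x) (y := z)
      have := dist_nonneg (x := f z) (y := y)
      linarith
    have B : (⨅ z, (dist x z + K + dist (f z) y)) ≤ dist x (g y) + K + dist (f (g y)) y :=
      ciInf_le hbdd (g y)
    have t3 : dist x (g y) ≤ d.k x y + d.k (g y) y := d.cross_left x (g y) y
    have t4 : dist (f (g y)) y ≤ d.k (g y) (f (g y)) + d.k (g y) y :=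
      d.cross_right (g y) (f (g y)) y
    constructor
    · rw [one_div_one, one_mul]
      linarith [hgK y, hfK (g y)]
    · rw [one_mul]
      linarith
end
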